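/- Let W, V_1, ..., V_n be a Nica-covariant isometric representation of the odometer semigroup O_n (so W* V_1 = V_n W*). Then V_1* W^n = W V_1*. -/
import Mathlib


open ContinuousLinearMap

/-- For a Nica-covariant isometric representation `{W, V_1, …, V_n}` of the odometer
semigroup `O_n` (indexed here by `Fin n`, with `V ⟨k⟩` playing the role of `V_{k+1}`):
`V_1* W^n = W V_1*`. -/
theorem stmt_9 {H : Type*} [NormedAddCommGroup H] [InnerProductSpace ℂ H] [CompleteSpace H]
    (n : ℕ) (hn : 0 < n) (W : H →L[ℂ] H) (V : Fin n → H →L[ℂ] H)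
    (hWiso : adjoint W ∘L W = 1)
    (hViso : ∀ i, adjoint (V i) ∘L V i = 1)
    (horth : ∀ i j, i ≠ j → adjoint (V i) ∘L V j = 0)
    (hWV : ∀ i : Fin n, ∀ h : (i : ℕ) + 1 < n, W ∘L V i = V ⟨(i : ℕ) + 1, h⟩)
    (hWVn : W ∘L V ⟨n - 1, by omega⟩ = V ⟨0, hn⟩ ∘L W)
    (hNC : adjoint W ∘L V ⟨0, hn⟩ = V ⟨n - 1, by omega⟩ ∘L adjoint W) :
    adjoint (V ⟨0, hn⟩) ∘L W ^ n = W ∘L adjoint (V ⟨0, hn⟩) := by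
  -- Step lemma: V⟨k+1⟩* ∘ W = V⟨k⟩*
  have step : ∀ (k : ℕ) (h : k + 1 < n),
      adjoint (V ⟨k + 1, h⟩) ∘L W = adjoint (V ⟨k, by omega⟩) := by
    intro k h
    have hk := hWV ⟨k, by omega⟩ h
    calc adjoint (V ⟨k + 1, h⟩) ∘L W
        = adjoint (W ∘L V ⟨k, by omega⟩) ∘L W := by rw [hk]
      _ = adjoint (V ⟨k, by omega⟩) ∘L (adjoint W ∘L W) := by
            rw [adjoint_comp, comp_assoc]
      _ = adjoint (V ⟨k, by omega⟩) := by rw [hWiso, ContinuousLinearMap.one_def, comp_id]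
  -- Main induction: V⟨k⟩* ∘ W^k = V⟨0⟩*
  have main : ∀ (k : ℕ) (h : k < n),
      adjoint (V ⟨k, h⟩) ∘L W ^ k = adjoint (V ⟨0, hn⟩) := by
    intro k
    induction k with
    | zero => intro h; rw [pow_zero, ContinuousLinearMap.one_def, comp_id]
    | succ k ih =>
      intro h
      have hpow : W ^ (k + 1) = W ∘L W ^ k := by
        rw [pow_succ']; rfl
      calc adjoint (V ⟨k + 1, h⟩) ∘L W ^ (k + 1)
          = (adjoint (V ⟨k + 1, h⟩) ∘L W) ∘L W ^ k := by rw [hpow, comp_assoc]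
        _ = adjoint (V ⟨k, by omega⟩) ∘L W ^ k := by rw [step k h]
        _ = adjoint (V ⟨0, hn⟩) := ih _
  -- V⟨0⟩* ∘ W = W ∘ V⟨n-1⟩*  (adjoint of Nica covariance)
  have hNC' : adjoint (V ⟨0, hn⟩) ∘L W = W ∘L adjoint (V ⟨n - 1, by omega⟩) := by
    have := congrArg adjoint hNC
    simpa using this
  have hn1 : n = (n - 1) + 1 := by omega
  have hpow : W ^ n = W ^ (n - 1 + 1) := by rw [← hn1]
  calc adjoint (V ⟨0, hn⟩) ∘L W ^ n
      = (adjoint (V ⟨0, hn⟩) ∘L W) ∘L W ^ (n - 1) := by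
        rw [hpow, pow_succ']; rw [comp_assoc]; rfl
    _ = W ∘L (adjoint (V ⟨n - 1, by omega⟩) ∘L W ^ (n - 1)) := by
        rw [hNC', comp_assoc]
    _ = W ∘L adjoint (V ⟨0, hn⟩) := by rw [main (n - 1) (by omega)]
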